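/- For every integer n ≥ 2, the Hosoya polynomial of the Mycielskian of the star S_n is H(μ(S_n), x) = (4n+1)x + (2n² + n + 2)x². -/

import Mathlib

open SimpleGraph Polynomial Finset

/-- The Mycielskian `μ(G)` of a simple graph `G`. Vertices `Sum.inl v` are the original
vertices `v_i`, vertices `Sum.inr (Sum.inl v)` are the shadow vertices `u_i`, and
`Sum.inr (Sum.inr ())` is the apex vertex `w`.  Edges: the edges of `G`, the edges `w u_i`,
and the edges `u_i v_j`, `u_j v_i` for every edge `v_i v_j` of `G`. -/
def mycielskian {V : Type*} (G : SimpleGraph V) : SimpleGraph (V ⊕ V ⊕ Unit) :=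
  SimpleGraph.fromRel (fun a b =>
    match a, b with
    | Sum.inl a, Sum.inl b => G.Adj a b
    | Sum.inl a, Sum.inr (Sum.inl b) => G.Adj a b
    | Sum.inr (Sum.inl _), Sum.inr (Sum.inr _) => True
    | _, _ => False)

/-- `distCount G k` is `d(G,k)`, the number of unordered pairs of distinct vertices of `G`
whose graph distance is exactly `k`. -/
noncomputable def distCount {V : Type*} (G : SimpleGraph V) (k : ℕ) : ℕ :=
  Nat.card {e : Sym2 V // ¬ e.IsDiag ∧ Sym2.lift ⟨G.dist, fun _ _ => G.dist_comm⟩ e = k}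

/-- The Hosoya polynomial `H(G,x) = Σ_{k=1}^{D(G)} d(G,k) x^k` (with rational coefficients). -/
noncomputable def hosoya {V : Type*} (G : SimpleGraph V) : Polynomial ℚ :=
  ∑ k ∈ Finset.Icc 1 G.diam, (distCount G k : ℚ) • Polynomial.X ^ k

/-- The Wiener index `W(G)`: the sum of distances over all unordered pairs of distinct
vertices (the diagonal contributes `0`, so we may sum over ordered pairs and halve). -/
noncomputable def wiener {V : Type*} (G : SimpleGraph V) [Fintype V] : ℚ :=
  (∑ u : V, ∑ v : V, (G.dist u v : ℚ)) / 2

/-- The Hyper-Wiener index `WW(G) = (1/2) Σ_{{u,v}} (d(u,v)² + d(u,v))`. -/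
noncomputable def hyperWiener {V : Type*} (G : SimpleGraph V) [Fintype V] : ℚ :=
  (∑ u : V, ∑ v : V, ((G.dist u v : ℚ) ^ 2 + (G.dist u v : ℚ))) / 4

/-- The TSZ index `TSZ(G) = (1/6) Σ_{{u,v}} d³ + (1/2) Σ_{{u,v}} d² + (1/3) Σ_{{u,v}} d`. -/
noncomputable def tszIndex {V : Type*} (G : SimpleGraph V) [Fintype V] : ℚ :=
  (∑ u : V, ∑ v : V, (G.dist u v : ℚ) ^ 3) / 12
    + (∑ u : V, ∑ v : V, (G.dist u v : ℚ) ^ 2) / 4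
    + (∑ u : V, ∑ v : V, (G.dist u v : ℚ)) / 6

/-- The Harary index `Har(G) = Σ_{{u,v}} 1/d(u,v)` (diagonal terms are `0⁻¹ = 0`). -/
noncomputable def harary {V : Type*} (G : SimpleGraph V) [Fintype V] : ℚ :=
  (∑ u : V, ∑ v : V, ((G.dist u v : ℚ))⁻¹) / 2

/-- The closeness `C(G) = Σ_u Σ_{v ≠ u} 2^{-d(u,v)}` over ordered pairs of distinct vertices. -/
noncomputable def closeness {V : Type*} (G : SimpleGraph V) [Fintype V] : ℚ :=
  letI := Classical.decEq V
  ∑ u : V, ∑ v : V, if v = u then 0 else ((1 : ℚ) / 2) ^ (G.dist u v)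

/-- `σ_{uv}`: the number of shortest paths (walks of length `dist u v`) from `u` to `v`. -/
noncomputable def numSP {V : Type*} (G : SimpleGraph V) (u v : V) : ℕ :=
  Nat.card {p : G.Walk u v // p.length = G.dist u v}

/-- `σ_{uv}(w)`: the number of shortest paths from `u` to `v` passing through `w`. -/
noncomputable def numSPthrough {V : Type*} (G : SimpleGraph V) (w u v : V) : ℕ :=
  Nat.card {p : G.Walk u v // p.length = G.dist u v ∧ w ∈ p.support}

/-- The betweenness centrality `B_w = Σ_{{u,v}, u ≠ w ≠ v} σ_{uv}(w)/σ_{uv}` of a vertex `w`,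
summed over unordered pairs of distinct vertices (ordered pairs, halved). -/
noncomputable def btwVertex {V : Type*} (G : SimpleGraph V) [Fintype V] (w : V) : ℚ :=
  letI := Classical.decEq V
  (∑ u : V, ∑ v : V,
    if u ≠ v ∧ u ≠ w ∧ v ≠ w then (numSPthrough G w u v : ℚ) / (numSP G u v) else 0) / 2

/-- The betweenness centrality of a graph: `B⁻(G) = (1/N) Σ_w B_w`. -/
noncomputable def btw {V : Type*} (G : SimpleGraph V) [Fintype V] : ℚ :=
  (∑ w : V, btwVertex G w) / (Fintype.card V)

/-- The star graph `S_n`: center `0` joined to the `n` leaves `1, …, n`. -/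
def starGraph (n : ℕ) : SimpleGraph (Fin (n + 1)) :=
  SimpleGraph.fromRel (fun a _ => a = 0)

/-- The join `G₁ ⊕ G₂` of two graphs on disjoint vertex sets: all edges of `G₁`, all edges
of `G₂`, and all edges between `V(G₁)` and `V(G₂)`. -/
def joinGraph {V₁ V₂ : Type*} (G₁ : SimpleGraph V₁) (G₂ : SimpleGraph V₂) :
    SimpleGraph (V₁ ⊕ V₂) :=
  SimpleGraph.fromRel (fun a b =>
    match a, b with
    | Sum.inl a, Sum.inl b => G₁.Adj a b
    | Sum.inr a, Sum.inr b => G₂.Adj a b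
    | Sum.inl _, Sum.inr _ => True
    | _, _ => False)

variable {n : ℕ}

abbrev MG (n : ℕ) := mycielskian (_root_.starGraph n)

lemma adj_ll (a b : Fin (n+1)) : (MG n).Adj (Sum.inl a) (Sum.inl b) ↔ a ≠ b ∧ (a = 0 ∨ b = 0) := by
  simp [mycielskian, _root_.starGraph, fromRel_adj]; tauto

lemma adj_lu (a b : Fin (n+1)) :
    (MG n).Adj (Sum.inl a) (Sum.inr (Sum.inl b)) ↔ a ≠ b ∧ (a = 0 ∨ b = 0) := by
  simp [mycielskian, _root_.starGraph, fromRel_adj]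

lemma adj_uw (a : Fin (n+1)) (t : Unit) :
    (MG n).Adj (Sum.inr (Sum.inl a)) (Sum.inr (Sum.inr t)) := by
  simp [mycielskian, _root_.starGraph, fromRel_adj]

lemma adj_lw (a : Fin (n+1)) (t : Unit) :
    ¬ (MG n).Adj (Sum.inl a) (Sum.inr (Sum.inr t)) := by
  simp [mycielskian, _root_.starGraph, fromRel_adj]

lemma adj_uu (a b : Fin (n+1)) :
    ¬ (MG n).Adj (Sum.inr (Sum.inl a)) (Sum.inr (Sum.inl b)) := by
  simp [mycielskian, _root_.starGraph, fromRel_adj]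

lemma adj_ww (s t : Unit) :
    ¬ (MG n).Adj (Sum.inr (Sum.inr s)) (Sum.inr (Sum.inr t)) := by
  simp [mycielskian, _root_.starGraph, fromRel_adj]

lemma adj_ul (a b : Fin (n+1)) :
    (MG n).Adj (Sum.inr (Sum.inl a)) (Sum.inl b) ↔ b ≠ a ∧ (b = 0 ∨ a = 0) := by
  rw [adj_comm]; exact adj_lu b a

lemma adj_wl (t : Unit) (b : Fin (n+1)) :
    ¬ (MG n).Adj (Sum.inr (Sum.inr t)) (Sum.inl b) := by
  rw [adj_comm]; exact adj_lw b t

lemma adj_wu (t : Unit) (b : Fin (n+1)) :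
    (MG n).Adj (Sum.inr (Sum.inr t)) (Sum.inr (Sum.inl b)) :=
  (adj_uw b t).symm

lemma common_nbr (hn : 1 ≤ n) (x y : Fin (n+1) ⊕ Fin (n+1) ⊕ Unit) (hxy : x ≠ y)
    (hadj : ¬ (MG n).Adj x y) : ∃ z, (MG n).Adj x z ∧ (MG n).Adj z y := by
  have h1 : (1 : ℕ) < n + 1 := by omega
  set e1 : Fin (n+1) := ⟨1, h1⟩ with he1
  have he10 : e1 ≠ 0 := by simp [he1, Fin.ext_iff]
  rcases x with a | a | t <;> rcases y with b | b | s
  · -- l a, l b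
    rw [adj_ll] at hadj
    have hab : a ≠ b := fun h => hxy (by rw [h])
    push_neg at hadj
    obtain ⟨ha, hb⟩ := hadj hab
    exact ⟨Sum.inl 0, (adj_ll a 0).2 ⟨ha, Or.inr rfl⟩, (adj_ll 0 b).2 ⟨fun h => hb h.symm, Or.inl rfl⟩⟩
  · -- l a, u b
    rw [adj_lu] at hadj
    by_cases ha : a = 0
    · subst ha
      have hb : b = 0 := by
        by_contra hb
        exact hadj ⟨fun h => hb h.symm, Or.inl rfl⟩
      subst hb
      exact ⟨Sum.inl e1, (adj_ll 0 e1).2 ⟨fun h => he10 h.symm, Or.inl rfl⟩,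
        (adj_lu e1 0).2 ⟨he10, Or.inr rfl⟩⟩
    · have hb : b ≠ 0 := by
        intro hb; subst hb
        exact hadj ⟨ha, Or.inr rfl⟩
      exact ⟨Sum.inl 0, (adj_ll a 0).2 ⟨ha, Or.inr rfl⟩,
        (adj_lu 0 b).2 ⟨fun h => hb h.symm, Or.inl rfl⟩⟩
  · -- l a, w
    by_cases ha : a = 0
    · subst ha
      exact ⟨Sum.inr (Sum.inl e1), (adj_lu 0 e1).2 ⟨fun h => he10 h.symm, Or.inl rfl⟩, adj_uw e1 s⟩
    · exact ⟨Sum.inr (Sum.inl 0), (adj_lu a 0).2 ⟨ha, Or.inr rfl⟩, adj_uw 0 s⟩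
  · -- u a, l b
    rw [← (MG n).adj_comm, adj_lu] at hadj
    by_cases hb : b = 0
    · subst hb
      have ha : a = 0 := by
        by_contra ha
        exact hadj ⟨fun h => ha h.symm, Or.inl rfl⟩
      subst ha
      exact ⟨Sum.inl e1, ((MG n).adj_comm _ _).1 ((adj_lu e1 0).2 ⟨he10, Or.inr rfl⟩),
        ((MG n).adj_comm _ _).1 ((adj_ll 0 e1).2 ⟨fun h => he10 h.symm, Or.inl rfl⟩)⟩
    · have ha : a ≠ 0 := by
        intro ha; subst ha
        exact hadj ⟨hb, Or.inr rfl⟩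
      exact ⟨Sum.inl 0, ((MG n).adj_comm _ _).1 ((adj_lu 0 a).2 ⟨fun h => ha h.symm, Or.inl rfl⟩),
        ((MG n).adj_comm _ _).1 ((adj_ll b 0).2 ⟨hb, Or.inr rfl⟩)⟩
  · -- u a, u b
    exact ⟨Sum.inr (Sum.inr ()), adj_uw a (), ((MG n).adj_comm _ _).1 (adj_uw b ())⟩
  · -- u a, w : adjacent, contradiction
    exact absurd (adj_uw a s) hadj
  · -- w, l b
    by_cases hb : b = 0
    · subst hb
      exact ⟨Sum.inr (Sum.inl e1), ((MG n).adj_comm _ _).1 (adj_uw e1 t),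
        ((MG n).adj_comm _ _).1 ((adj_lu 0 e1).2 ⟨fun h => he10 h.symm, Or.inl rfl⟩)⟩
    · exact ⟨Sum.inr (Sum.inl 0), ((MG n).adj_comm _ _).1 (adj_uw 0 t),
        ((MG n).adj_comm _ _).1 ((adj_lu b 0).2 ⟨hb, Or.inr rfl⟩)⟩
  · -- w, u b : adjacent
    exact absurd (((MG n).adj_comm _ _).1 (adj_uw b t)) hadj
  · -- w, w
    exact absurd (Subsingleton.elim t s) (by simpa using hxy ∘ congrArg (Sum.inr ∘ Sum.inr))

lemma mg_dist2 (hn : 1 ≤ n) (x y : Fin (n+1) ⊕ Fin (n+1) ⊕ Unit) (hxy : x ≠ y)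
    (h : ¬ (MG n).Adj x y) : (MG n).dist x y = 2 := by
  obtain ⟨z, h1, h2⟩ := common_nbr hn x y hxy h
  have hle : (MG n).dist x y ≤ 2 := by
    have := dist_le (Walk.cons h1 (Walk.cons h2 Walk.nil))
    simpa using this
  have hne0 : (MG n).dist x y ≠ 0 := by
    rw [dist_ne_zero_iff_ne_and_reachable]
    exact ⟨hxy, ⟨Walk.cons h1 (Walk.cons h2 Walk.nil)⟩⟩
  have hne1 : (MG n).dist x y ≠ 1 := fun hd => h (dist_eq_one_iff_adj.1 hd)
  omega

lemma mg_edist_le (hn : 1 ≤ n) (x y : Fin (n+1) ⊕ Fin (n+1) ⊕ Unit) :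
    (MG n).edist x y ≤ 2 := by
  rcases eq_or_ne x y with rfl | hxy
  · simp [SimpleGraph.edist_self]
  by_cases h : (MG n).Adj x y
  · calc (MG n).edist x y ≤ (h.toWalk).length := edist_le _
      _ ≤ 2 := by simp
  · obtain ⟨z, h1, h2⟩ := common_nbr hn x y hxy h
    calc (MG n).edist x y ≤ (Walk.cons h1 (Walk.cons h2 Walk.nil)).length := edist_le _
      _ ≤ 2 := by simp

lemma mg_diam (hn : 2 ≤ n) : (MG n).diam = 2 := by
  have h1 : (1 : ℕ) < n + 1 := by omega
  have h2 : (2 : ℕ) < n + 1 := by omega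
  set a1 : Fin (n+1) := ⟨1, h1⟩
  set a2 : Fin (n+1) := ⟨2, h2⟩
  have hne : a1 ≠ a2 := by simp [a1, a2, Fin.ext_iff]
  have hnadj : ¬ (MG n).Adj (Sum.inl a1) (Sum.inl a2) := by
    rw [adj_ll]
    rintro ⟨-, h | h⟩ <;> simp [a1, a2, Fin.ext_iff] at h
  have hd : (MG n).dist (Sum.inl a1) (Sum.inl a2) = 2 :=
    mg_dist2 (by omega) _ _ (by simp [hne]) hnadj
  have hediam : (MG n).ediam = 2 := by
    apply le_antisymm
    · exact ediam_le_of_edist_le (fun u v => mg_edist_le (by omega) u v)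
    · have hle := mg_edist_le (n := n) (by omega) (Sum.inl a1) (Sum.inl a2)
      have htop : (MG n).edist (Sum.inl a1) (Sum.inl a2) ≠ ⊤ :=
        fun ht => by simp [ht] at hle
      have : (MG n).edist (Sum.inl a1) (Sum.inl a2) = 2 := by
        have := ENat.coe_toNat htop
        rw [← this]
        rw [show ((MG n).edist (Sum.inl a1) (Sum.inl a2)).toNat = (MG n).dist (Sum.inl a1) (Sum.inl a2) from rfl, hd]
        rfl
      rw [← this]
      exact edist_le_ediam
  rw [diam, hediam]
  rfl


lemma sum_ind_star (n : ℕ) (hn : 1 ≤ n) :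
    ∑ a : Fin (n+1), ∑ b : Fin (n+1), (if a ≠ b ∧ (a = 0 ∨ b = 0) then (1:ℕ) else 0)
      = 2 * n := by
  have hinner : ∀ a : Fin (n+1),
      ∑ b : Fin (n+1), (if a ≠ b ∧ (a = 0 ∨ b = 0) then (1:ℕ) else 0)
        = if a = 0 then n else 1 := by
    intro a
    by_cases ha : a = 0
    · subst ha
      rw [if_pos rfl]
      have : ∀ b : Fin (n+1), (if (0:Fin (n+1)) ≠ b ∧ ((0:Fin (n+1)) = 0 ∨ b = 0) then (1:ℕ) else 0)
          = if b ≠ 0 then 1 else 0 := by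
        intro b
        refine if_congr ?_ rfl rfl
        simp [eq_comm, ne_comm]
      rw [Finset.sum_congr rfl (fun b _ => this b), ← Finset.card_filter,
        Finset.filter_ne', Finset.card_erase_of_mem (Finset.mem_univ _)]
      simp
    · rw [if_neg ha]
      have : ∀ b : Fin (n+1), (if a ≠ b ∧ (a = 0 ∨ b = 0) then (1:ℕ) else 0)
          = if b = 0 then 1 else 0 := by
        intro b
        refine if_congr ?_ rfl rfl
        constructor
        · rintro ⟨h1, h2 | h2⟩
          · exact absurd h2 ha
          · exact h2
        · rintro rfl
          exact ⟨ha, Or.inr rfl⟩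
      rw [Finset.sum_congr rfl (fun b _ => this b), Finset.sum_ite_eq' Finset.univ 0 (fun _ => 1)]
      simp
  rw [Finset.sum_congr rfl (fun a _ => hinner a)]
  have hsplit : ∀ a : Fin (n+1), (if a = 0 then n else 1) = (if a = 0 then n - 1 else 0) + 1 := by
    intro a
    by_cases h : a = 0 <;> simp [h]
    omega
  rw [Finset.sum_congr rfl (fun a _ => hsplit a), Finset.sum_add_distrib,
    Finset.sum_ite_eq' Finset.univ 0 (fun _ => n - 1), Finset.sum_const]
  simp
  omega

lemma sum_ind_star' (n : ℕ) (hn : 1 ≤ n) :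
    ∑ a : Fin (n+1), ∑ b : Fin (n+1), (if b ≠ a ∧ (b = 0 ∨ a = 0) then (1:ℕ) else 0)
      = 2 * n := by
  rw [Finset.sum_comm]
  exact sum_ind_star n hn

instance starAdjDec : DecidableRel (_root_.starGraph n).Adj := fun a b =>
  decidable_of_iff _ (SimpleGraph.fromRel_adj _ a b).symm

def mgR (x y : Fin (n+1) ⊕ Fin (n+1) ⊕ Unit) : Prop :=
  match x, y with
  | Sum.inl a, Sum.inl b => (_root_.starGraph n).Adj a b
  | Sum.inl a, Sum.inr (Sum.inl b) => (_root_.starGraph n).Adj a b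
  | Sum.inr (Sum.inl _), Sum.inr (Sum.inr _) => True
  | _, _ => False

instance mgRDec : ∀ (x y : Fin (n+1) ⊕ Fin (n+1) ⊕ Unit), Decidable (mgR x y)
  | Sum.inl a, Sum.inl b => inferInstanceAs (Decidable ((_root_.starGraph n).Adj a b))
  | Sum.inl a, Sum.inr (Sum.inl b) => inferInstanceAs (Decidable ((_root_.starGraph n).Adj a b))
  | Sum.inl _, Sum.inr (Sum.inr _) => inferInstanceAs (Decidable False)
  | Sum.inr (Sum.inl _), Sum.inl _ => inferInstanceAs (Decidable False)
  | Sum.inr (Sum.inl _), Sum.inr (Sum.inl _) => inferInstanceAs (Decidable False)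
  | Sum.inr (Sum.inl _), Sum.inr (Sum.inr _) => inferInstanceAs (Decidable True)
  | Sum.inr (Sum.inr _), _ => inferInstanceAs (Decidable False)

lemma mg_adj_iff (x y : Fin (n+1) ⊕ Fin (n+1) ⊕ Unit) :
    (MG n).Adj x y ↔ x ≠ y ∧ (mgR x y ∨ mgR y x) := by
  show (SimpleGraph.fromRel _).Adj x y ↔ _
  rw [SimpleGraph.fromRel_adj]
  rcases x with a | a | t <;> rcases y with b | b | s <;> exact Iff.rfl

instance mgAdjDec : DecidableRel (MG n).Adj := fun x y =>
  decidable_of_iff _ (mg_adj_iff x y).symm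

lemma mg_sum_deg (hn : 1 ≤ n) : ∑ v, (MG n).degree v = 8 * n + 2 := by
  have hdeg : ∀ v, (MG n).degree v = ∑ u, if (MG n).Adj v u then (1:ℕ) else 0 := by
    intro v
    rw [← card_neighborFinset_eq_degree, neighborFinset_eq_filter, Finset.card_filter]
  rw [Finset.sum_congr rfl fun v _ => hdeg v]
  simp only [Fintype.sum_sum_type]
  simp only [adj_ll, adj_lu, adj_ul, adj_lw, adj_uu, adj_uw, adj_ww, adj_wl, adj_wu]
  simp only [if_true, if_false, Finset.sum_const_zero, Finset.sum_const, Finset.card_univ,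
    Fintype.card_fin, Fintype.card_sum, Fintype.card_unit, smul_eq_mul, mul_one, add_zero, zero_add]
  rw [Finset.sum_add_distrib, Finset.sum_add_distrib, sum_ind_star n hn, sum_ind_star' n hn,
    Finset.sum_const, Finset.card_univ, Fintype.card_fin]
  simp only [smul_eq_mul, mul_one, one_mul]
  ring

lemma mg_card_edges (hn : 1 ≤ n) : #(MG n).edgeFinset = 4 * n + 1 := by
  have h := (MG n).sum_degrees_eq_twice_card_edges
  rw [mg_sum_deg hn] at h
  omega

lemma mg_d1 (hn : 1 ≤ n) : distCount (MG n) 1 = 4 * n + 1 := by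
  have hP : ∀ e : Sym2 (Fin (n+1) ⊕ Fin (n+1) ⊕ Unit),
      (¬ e.IsDiag ∧ Sym2.lift ⟨(MG n).dist, fun _ _ => (MG n).dist_comm⟩ e = 1)
        ↔ e ∈ (MG n).edgeSet := by
    intro e
    induction e using Sym2.ind with
    | _ x y =>
      simp only [Sym2.lift_mk, Sym2.mk_isDiag_iff, mem_edgeSet]
      constructor
      · rintro ⟨-, hd⟩; exact dist_eq_one_iff_adj.1 hd
      · intro h; exact ⟨h.ne, dist_eq_one_iff_adj.2 h⟩
  rw [distCount, Nat.card_congr (Equiv.subtypeEquivRight hP), Nat.card_eq_fintype_card,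
    ← edgeFinset_card]
  exact mg_card_edges hn

lemma mg_d2 (hn : 2 ≤ n) : distCount (MG n) 2 = 2 * n ^ 2 + n + 2 := by
  classical
  set f : Sym2 (Fin (n+1) ⊕ Fin (n+1) ⊕ Unit) → ℕ :=
    Sym2.lift ⟨(MG n).dist, fun _ _ => (MG n).dist_comm⟩ with hf
  have key : ∀ k, distCount (MG n) k
      = #(Finset.univ.filter (fun e : Sym2 (Fin (n+1) ⊕ Fin (n+1) ⊕ Unit) =>
          ¬ e.IsDiag ∧ f e = k)) := by
    intro k
    rw [distCount, Nat.card_eq_fintype_card, Fintype.card_subtype]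
  have hunion : (Finset.univ.filter (fun e : Sym2 (Fin (n+1) ⊕ Fin (n+1) ⊕ Unit) =>
        (¬ e.IsDiag ∧ f e = 1) ∨ (¬ e.IsDiag ∧ f e = 2)))
      = Finset.univ.filter (fun e => ¬ e.IsDiag) := by
    apply Finset.filter_congr
    intro e _
    induction e using Sym2.ind with
    | _ x y =>
      simp only [hf, Sym2.lift_mk, Sym2.mk_isDiag_iff]
      constructor
      · rintro (⟨h, -⟩ | ⟨h, -⟩) <;> exact h
      · intro h
        by_cases ha : (MG n).Adj x y
        · exact Or.inl ⟨h, dist_eq_one_iff_adj.2 ha⟩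
        · exact Or.inr ⟨h, mg_dist2 (by omega) x y h ha⟩
  have hdisj : Disjoint
      (Finset.univ.filter (fun e : Sym2 (Fin (n+1) ⊕ Fin (n+1) ⊕ Unit) => ¬ e.IsDiag ∧ f e = 1))
      (Finset.univ.filter (fun e => ¬ e.IsDiag ∧ f e = 2)) := by
    rw [Finset.disjoint_filter]
    rintro e - ⟨-, h1⟩ ⟨-, h2⟩
    omega
  have hcard : #(Finset.univ.filter
        (fun e : Sym2 (Fin (n+1) ⊕ Fin (n+1) ⊕ Unit) => ¬ e.IsDiag))
      = (2 * n + 3).choose 2 := by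
    rw [← Fintype.card_subtype, Sym2.card_subtype_not_diag]
    congr 1
    simp only [Fintype.card_sum, Fintype.card_fin, Fintype.card_unit]
    omega
  have hchoose : (2 * n + 3).choose 2 = 2 * n ^ 2 + 5 * n + 3 := by
    rw [Nat.choose_two_right]
    have h1 : 2 * n + 3 - 1 = 2 * n + 2 := by omega
    rw [h1]
    have h2 : (2 * n + 3) * (2 * n + 2) = (2 * n ^ 2 + 5 * n + 3) * 2 := by ring
    rw [h2, Nat.mul_div_cancel _ (by norm_num)]
  have htotal : distCount (MG n) 1 + distCount (MG n) 2 = 2 * n ^ 2 + 5 * n + 3 := by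
    rw [key 1, key 2, ← Finset.card_union_of_disjoint hdisj, ← Finset.filter_or, hunion,
      hcard, hchoose]
  have hd1 := mg_d1 (n := n) (by omega)
  have hsq : 0 ≤ n ^ 2 := Nat.zero_le _
  omega

/-- For `n ≥ 2`, `H(μ(S_n), x) = (4n+1)x + (2n²+n+2)x²`. -/
theorem stmt_5 (n : ℕ) (hn : 2 ≤ n) :
    hosoya (mycielskian (_root_.starGraph n)) =
      Polynomial.C ((4 * n + 1 : ℕ) : ℚ) * Polynomial.X +
        Polynomial.C ((2 * n ^ 2 + n + 2 : ℕ) : ℚ) * Polynomial.X ^ 2 := by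
  rw [hosoya]
  rw [show (mycielskian (_root_.starGraph n)).diam = 2 from mg_diam hn]
  rw [show Finset.Icc 1 2 = {1, 2} from rfl]
  rw [Finset.sum_insert (by decide), Finset.sum_singleton]
  rw [show distCount (mycielskian (_root_.starGraph n)) 1 = 4 * n + 1 from mg_d1 (by omega),
    show distCount (mycielskian (_root_.starGraph n)) 2 = 2 * n ^ 2 + n + 2 from mg_d2 hn]
  rw [Polynomial.smul_eq_C_mul, Polynomial.smul_eq_C_mul, pow_one]
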